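/- arXiv:1701.04176 — 3 statements merged into one kernel-verified Lean document; each statement's English description precedes it below -/
import Mathlib

section
/- Suppose 0 < D_min ≤ D_j ≤ D_max for all j = 1,…,m. Then for every fixed y ∈ ℝ^m and every A ≥ 0, the residual likelihood satisfies L_RE(A) ≤ det(XᵀX)^{-1/2} · (A + D_max)^{p/2} · (A + D_min)^{-m/2}. -/
open Matrix

/-- The covariance matrix `V(A) = diag(A + D₁, …, A + Dₘ)` of the Fay–Herriot model. -/
noncomputable def Vmat {m : ℕ} (D : Fin m → ℝ) (A : ℝ) : Matrix (Fin m) (Fin m) ℝ :=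
  Matrix.diagonal (fun j => A + D j)

/-- The matrix `P(A) = V(A)⁻¹ − V(A)⁻¹ X (Xᵀ V(A)⁻¹ X)⁻¹ Xᵀ V(A)⁻¹`. -/
noncomputable def Pmat {m p : ℕ} (X : Matrix (Fin m) (Fin p) ℝ) (D : Fin m → ℝ) (A : ℝ) :
    Matrix (Fin m) (Fin m) ℝ :=
  (Vmat D A)⁻¹ - (Vmat D A)⁻¹ * X * (Xᵀ * (Vmat D A)⁻¹ * X)⁻¹ * Xᵀ * (Vmat D A)⁻¹

/-- The residual likelihood
`L_RE(A) = det(Xᵀ V(A)⁻¹ X)^(−1/2) · det(V(A))^(−1/2) · exp(−½ yᵀ P(A) y)`. -/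
noncomputable def LRE {m p : ℕ} (X : Matrix (Fin m) (Fin p) ℝ) (D : Fin m → ℝ)
    (y : Fin m → ℝ) (A : ℝ) : ℝ :=
  ((Xᵀ * (Vmat D A)⁻¹ * X).det) ^ (-(1 : ℝ) / 2) * ((Vmat D A).det) ^ (-(1 : ℝ) / 2) *
    Real.exp (-(1 / 2) * (y ⬝ᵥ (Pmat X D A).mulVec y))

section Aux

variable {n : Type*} [Fintype n] [DecidableEq n]

lemma aux_eig_one_add {Q : Matrix n n ℝ} (hQ : Q.PosSemidef) (i : n) :
    1 ≤ ((Matrix.PosSemidef.one.add hQ : Matrix.PosSemidef (1 + Q)).isHermitian).eigenvalues i := by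
  set h1Q : Matrix.PosSemidef (1 + Q) := Matrix.PosSemidef.one.add hQ
  have h := h1Q.isHermitian.eigenvalues_eq i
  set v : n → ℝ := ⇑(h1Q.isHermitian.eigenvectorBasis i) with hv
  have hnorm : ‖h1Q.isHermitian.eigenvectorBasis i‖ = 1 :=
    h1Q.isHermitian.eigenvectorBasis.orthonormal.1 i
  have hvdot : v ⬝ᵥ v = 1 := by
    have h2 : Real.sqrt (∑ j, ‖v j‖ ^ 2) = 1 := by
      have h4 := EuclideanSpace.norm_eq (h1Q.isHermitian.eigenvectorBasis i)
      rw [hnorm] at h4; exact h4.symm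
    have h3 : (∑ j, ‖v j‖ ^ 2) = 1 := by
      have := congrArg (fun x => x ^ 2) h2
      simp only [Real.sq_sqrt (Finset.sum_nonneg fun j _ => sq_nonneg _), one_pow] at this
      exact this
    rw [dotProduct, ← h3]
    exact Finset.sum_congr rfl fun j _ => by rw [Real.norm_eq_abs, sq_abs, pow_two]
  have hq : 0 ≤ v ⬝ᵥ Q.mulVec v := by simpa using hQ.dotProduct_mulVec_nonneg v
  rw [h]
  have : (star v) ⬝ᵥ (1 + Q).mulVec v = v ⬝ᵥ v + v ⬝ᵥ Q.mulVec v := by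
    simp [Matrix.add_mulVec, Matrix.one_mulVec, dotProduct_add]
  rw [this]
  simp only [RCLike.re_to_real]
  rw [hvdot]
  linarith

lemma aux_det_one_add {Q : Matrix n n ℝ} (hQ : Q.PosSemidef) :
    1 ≤ (1 + Q).det := by
  set h1Q : Matrix.PosSemidef (1 + Q) := Matrix.PosSemidef.one.add hQ
  have hdet := h1Q.isHermitian.det_eq_prod_eigenvalues
  rw [RCLike.ofReal_real_eq_id] at hdet
  simp only [id] at hdet
  rw [hdet]
  have := Finset.prod_le_prod (s := Finset.univ) (f := fun _ : n => (1:ℝ))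
    (g := fun i => h1Q.isHermitian.eigenvalues i)
    (fun i _ => zero_le_one) (fun i _ => aux_eig_one_add hQ i)
  simpa using this

lemma aux_det_le_det_add {N P : Matrix n n ℝ} (hN : N.PosDef) (hP : P.PosSemidef) :
    N.det ≤ (N + P).det := by
  obtain ⟨C, hCC, hCps⟩ : ∃ C : Matrix n n ℝ, C * C = N ∧ C.PosSemidef := by
    open scoped MatrixOrder in
    exact ⟨CFC.sqrt N, CFC.sqrt_mul_sqrt_self N (Matrix.nonneg_iff_posSemidef.mpr hN.posSemidef),
      Matrix.nonneg_iff_posSemidef.mp (CFC.sqrt_nonneg N)⟩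
  have hCsymm : Cᵀ = C := hCps.isHermitian
  have hdetC : C.det * C.det = N.det := by rw [← Matrix.det_mul, hCC]
  have hdetCne : C.det ≠ 0 := by
    intro h; rw [h, mul_zero] at hdetC; exact hN.det_pos.ne (hdetC)
  have hu : IsUnit C.det := isUnit_iff_ne_zero.mpr hdetCne
  have hCinvT : (C⁻¹)ᵀ = C⁻¹ := by rw [Matrix.transpose_nonsing_inv, hCsymm]
  have hQps : (C⁻¹ * P * C⁻¹).PosSemidef := by
    have h1 := hP.conjTranspose_mul_mul_same C⁻¹
    rwa [Matrix.conjTranspose_eq_transpose_of_trivial, hCinvT] at h1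
  have hCi : C * C⁻¹ = 1 := Matrix.mul_nonsing_inv C hu
  have hCi' : C⁻¹ * C = 1 := Matrix.nonsing_inv_mul C hu
  have hkey : N + P = C * (1 + C⁻¹ * P * C⁻¹) * C := by
    have h2 : C * (1 + C⁻¹ * P * C⁻¹) * C = C * C + C * (C⁻¹ * P * C⁻¹) * C := by
      rw [Matrix.mul_add, Matrix.mul_one, Matrix.add_mul]
    have h3 : C * (C⁻¹ * P * C⁻¹) * C = P := by
      calc C * (C⁻¹ * P * C⁻¹) * C = (C * C⁻¹) * P * (C⁻¹ * C) := by
            simp only [Matrix.mul_assoc]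
        _ = P := by rw [hCi, hCi', Matrix.one_mul, Matrix.mul_one]
    rw [h2, h3, hCC]
  rw [hkey, Matrix.det_mul, Matrix.det_mul]
  have hb := aux_det_one_add hQps
  have h4 : C.det * (1 + C⁻¹ * P * C⁻¹).det * C.det = N.det * (1 + C⁻¹ * P * C⁻¹).det := by
    rw [← hdetC]; ring
  rw [h4]
  calc N.det = N.det * 1 := (mul_one _).symm
    _ ≤ N.det * (1 + C⁻¹ * P * C⁻¹).det := by
        exact mul_le_mul_of_nonneg_left hb hN.det_pos.le

end Aux

lemma aux_inj {m p : ℕ} (X : Matrix (Fin m) (Fin p) ℝ) (hX : X.rank = p) :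
    Function.Injective X.mulVec := by
  have hrn := X.mulVecLin.finrank_range_add_finrank_ker
  rw [Matrix.rank] at hX
  rw [hX] at hrn
  have hdom : Module.finrank ℝ (Fin p → ℝ) = p := by simp
  rw [hdom] at hrn
  have hker : Module.finrank ℝ (LinearMap.ker X.mulVecLin) = 0 := by omega
  have hbot : LinearMap.ker X.mulVecLin = ⊥ := Submodule.finrank_eq_zero.mp hker
  have hinj : Function.Injective X.mulVecLin := LinearMap.ker_eq_bot.mp hbot
  intro a b hab
  exact hinj (by simpa [Matrix.mulVecLin_apply] using hab)

lemma aux_posdef_tmul {m p : ℕ} (B : Matrix (Fin m) (Fin p) ℝ)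
    (h : Function.Injective B.mulVec) : (Bᵀ * B).PosDef := by
  have hps : (Bᵀ * B).PosSemidef := by
    have := Matrix.posSemidef_conjTranspose_mul_self B
    rwa [Matrix.conjTranspose_eq_transpose_of_trivial] at this
  refine Matrix.PosDef.of_dotProduct_mulVec_pos hps.isHermitian fun x hx => ?_
  have hq : star x ⬝ᵥ (Bᵀ * B) *ᵥ x = (B *ᵥ x) ⬝ᵥ (B *ᵥ x) := by
    rw [star_trivial, ← Matrix.mulVec_mulVec, Matrix.dotProduct_mulVec,
      Matrix.vecMul_transpose]
  rw [hq]
  have hBx : B *ᵥ x ≠ 0 := by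
    intro h0
    exact hx (h (by rw [h0, Matrix.mulVec_zero]))
  rcases lt_or_eq_of_le (Finset.sum_nonneg (fun i _ => mul_self_nonneg ((B *ᵥ x) i))
      : (0:ℝ) ≤ (B *ᵥ x) ⬝ᵥ (B *ᵥ x)) with h1 | h1
  · exact h1
  · exact absurd (dotProduct_self_eq_zero.mp h1.symm) hBx

lemma aux_proj_symm {k p : ℕ} (B : Matrix (Fin k) (Fin p) ℝ) (G : Matrix (Fin p) (Fin p) ℝ)
    (hGsymm : Gᵀ = G) : (B * G⁻¹ * Bᵀ)ᵀ = B * G⁻¹ * Bᵀ := by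
  simp only [Matrix.transpose_mul, Matrix.transpose_transpose, Matrix.transpose_nonsing_inv,
    hGsymm, Matrix.mul_assoc]

lemma aux_proj_idem {k p : ℕ} (B : Matrix (Fin k) (Fin p) ℝ) (G : Matrix (Fin p) (Fin p) ℝ)
    (hG : G = Bᵀ * B) (hGu : IsUnit G.det) :
    (B * G⁻¹ * Bᵀ) * (B * G⁻¹ * Bᵀ) = B * G⁻¹ * Bᵀ := by
  have h1 : B * G⁻¹ * Bᵀ * (B * G⁻¹ * Bᵀ) = B * (G⁻¹ * (Bᵀ * B) * G⁻¹) * Bᵀ := by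
    simp only [Matrix.mul_assoc]
  rw [h1, ← hG, Matrix.nonsing_inv_mul G hGu, Matrix.one_mul]

lemma aux_quad_nonneg {m p : ℕ} (S : Matrix (Fin m) (Fin m) ℝ) (X : Matrix (Fin m) (Fin p) ℝ)
    (hSsymm : Sᵀ = S) (G : Matrix (Fin p) (Fin p) ℝ)
    (hG : G = (S * X)ᵀ * (S * X)) (hGu : IsUnit G.det) (y : Fin m → ℝ) :
    0 ≤ y ⬝ᵥ (S * S - S * S * X * G⁻¹ * Xᵀ * (S * S)).mulVec y := by
  have hGsymm : Gᵀ = G := by rw [hG, Matrix.transpose_mul, Matrix.transpose_transpose]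
  set B := S * X with hBdef
  have hBT : Bᵀ = Xᵀ * S := by rw [hBdef, Matrix.transpose_mul, hSsymm]
  set Pr : Matrix (Fin m) (Fin m) ℝ := B * G⁻¹ * Bᵀ with hPidef
  have hfact : S * S - S * S * X * G⁻¹ * Xᵀ * (S * S) = S * ((1 - Pr) * S) := by
    rw [hPidef, hBT, hBdef]
    simp only [Matrix.sub_mul, Matrix.mul_sub, Matrix.one_mul, Matrix.mul_assoc]
  rw [hfact]
  have hdot : y ⬝ᵥ (S * ((1 - Pr) * S)).mulVec y
      = (S.mulVec y) ⬝ᵥ (1 - Pr).mulVec (S.mulVec y) := by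
    rw [← Matrix.mulVec_mulVec, Matrix.dotProduct_mulVec y S, ← hSsymm,
      Matrix.vecMul_transpose, hSsymm, Matrix.mulVec_mulVec]
  rw [hdot]
  set z := S.mulVec y with hz
  have hidem : Pr * Pr = Pr := aux_proj_idem B G hG hGu
  have hPiT : Prᵀ = Pr := aux_proj_symm B G hGsymm
  clear_value Pr
  clear_value z
  have h2 : (1 - Pr)ᵀ * (1 - Pr) = 1 - Pr := by
    rw [Matrix.transpose_sub, Matrix.transpose_one, hPiT, Matrix.sub_mul, Matrix.one_mul,
      Matrix.mul_sub, Matrix.mul_one, hidem, sub_self, sub_zero]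
  have h3 : z ⬝ᵥ (1 - Pr).mulVec z
      = ((1 - Pr).mulVec z) ⬝ᵥ ((1 - Pr).mulVec z) := by
    conv_lhs => rw [← h2]
    rw [← Matrix.mulVec_mulVec, Matrix.dotProduct_mulVec, Matrix.vecMul_transpose]
  rw [h3]
  exact Finset.sum_nonneg fun i _ => mul_self_nonneg _

lemma aux_smul_posdef {p : ℕ} (M : Matrix (Fin p) (Fin p) ℝ) (hM : M.PosDef)
    {c : ℝ} (hc : 0 < c) : (c • M).PosDef := by
  refine Matrix.PosDef.of_dotProduct_mulVec_pos ?_ fun x hx => ?_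
  · have h := hM.isHermitian
    rw [Matrix.IsHermitian] at h ⊢
    rw [Matrix.conjTranspose_smul, h]
    simp
  · rw [Matrix.smul_mulVec, dotProduct_smul]
    exact mul_pos hc (hM.dotProduct_mulVec_pos hx)

/-- If `0 < Dmin ≤ Dⱼ ≤ Dmax` for all `j`, then for every fixed `y` and every `A ≥ 0`,
`L_RE(A) ≤ det(XᵀX)^(−1/2) · (A + Dmax)^(p/2) · (A + Dmin)^(−m/2)`. -/
theorem stmt2 {m p : ℕ} (hm : 0 < m) (hp : 0 < p) (hpm : p ≤ m)
    (X : Matrix (Fin m) (Fin p) ℝ) (hX : X.rank = p)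
    (D : Fin m → ℝ) (Dmin Dmax : ℝ) (hDmin : 0 < Dmin)
    (hD : ∀ j, Dmin ≤ D j ∧ D j ≤ Dmax)
    (y : Fin m → ℝ) (A : ℝ) (hA : 0 ≤ A) :
    LRE X D y A ≤
      ((Xᵀ * X).det) ^ (-(1 : ℝ) / 2) * (A + Dmax) ^ ((p : ℝ) / 2) *
        (A + Dmin) ^ (-(m : ℝ) / 2) := by
  -- basic positivity facts
  have hj0 : Fin m := ⟨0, hm⟩
  have hDmM : Dmin ≤ Dmax := le_trans (hD hj0).1 (hD hj0).2
  have hd : ∀ j, 0 < A + D j := fun j => by have := (hD j).1; linarith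
  have ht : 0 < A + Dmax := by linarith
  have hs0 : 0 < A + Dmin := by linarith
  -- the inverse of V
  have hJ : (Vmat D A)⁻¹ = Matrix.diagonal (fun j => (A + D j)⁻¹) := by
    apply Matrix.inv_eq_right_inv
    rw [Vmat, Matrix.diagonal_mul_diagonal]
    have h : (fun i => (A + D i) * (A + D i)⁻¹) = fun _ : Fin m => (1:ℝ) :=
      funext fun j => mul_inv_cancel₀ (hd j).ne'
    rw [h, Matrix.diagonal_one]
  -- square root of the inverse of V
  set S : Matrix (Fin m) (Fin m) ℝ :=
    Matrix.diagonal (fun j => Real.sqrt ((A + D j)⁻¹)) with hSdef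
  have hSsymm : Sᵀ = S := Matrix.diagonal_transpose _
  have hSS : S * S = (Vmat D A)⁻¹ := by
    have hfun : (fun j => Real.sqrt ((A + D j)⁻¹) * Real.sqrt ((A + D j)⁻¹))
        = fun j => (A + D j)⁻¹ :=
      funext fun j => Real.mul_self_sqrt (inv_nonneg.mpr (hd j).le)
    rw [hSdef, Matrix.diagonal_mul_diagonal, hfun, hJ]
  have hSdet : S.det ≠ 0 := by
    rw [hSdef, Matrix.det_diagonal]
    exact (Finset.prod_pos fun j _ => Real.sqrt_pos.mpr (inv_pos.mpr (hd j))).ne'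
  have hSinj : Function.Injective S.mulVec := by
    haveI := S.invertibleOfIsUnitDet (isUnit_iff_ne_zero.mpr hSdet)
    exact S.mulVec_injective_of_invertible
  have hXinj := aux_inj X hX
  have hBinj : Function.Injective (S * X).mulVec := by
    intro a b hab
    rw [← Matrix.mulVec_mulVec, ← Matrix.mulVec_mulVec] at hab
    exact hXinj (hSinj hab)
  -- the Gram matrix G = Xᵀ V⁻¹ X is positive definite
  have hGform : Xᵀ * (Vmat D A)⁻¹ * X = (S * X)ᵀ * (S * X) := by
    rw [← hSS]
    simp only [Matrix.transpose_mul, hSsymm, Matrix.mul_assoc]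
  have hGpd : (Xᵀ * (Vmat D A)⁻¹ * X).PosDef := by
    rw [hGform]; exact aux_posdef_tmul (S * X) hBinj
  have hGu : IsUnit (Xᵀ * (Vmat D A)⁻¹ * X).det := isUnit_iff_ne_zero.mpr hGpd.det_pos.ne'
  have hXXpd : (Xᵀ * X).PosDef := aux_posdef_tmul X hXinj
  -- Part 1 : lower bound on det(Xᵀ V⁻¹ X)
  set c : ℝ := (A + Dmax)⁻¹ with hcdef
  have hc : 0 < c := inv_pos.mpr ht
  have hdecomp : Xᵀ * (Vmat D A)⁻¹ * X
      = c • (Xᵀ * X) + Xᵀ * Matrix.diagonal (fun j => (A + D j)⁻¹ - c) * X := by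
    rw [hJ]
    have h1 : Matrix.diagonal (fun j => (A + D j)⁻¹) = c • (1 : Matrix (Fin m) (Fin m) ℝ)
        + Matrix.diagonal (fun j => (A + D j)⁻¹ - c) := by
      rw [← Matrix.diagonal_one, ← Matrix.diagonal_smul]
      rw [Matrix.diagonal_add]
      congr 1; funext j; simp
    rw [h1, Matrix.mul_add, Matrix.add_mul, Matrix.mul_smul, Matrix.mul_one, Matrix.smul_mul]
  have hEps : (Xᵀ * Matrix.diagonal (fun j => (A + D j)⁻¹ - c) * X).PosSemidef := by
    have hEdiag : (Matrix.diagonal (fun j => (A + D j)⁻¹ - c)).PosSemidef := by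
      rw [Matrix.posSemidef_diagonal_iff]
      intro j
      have h2 : (A + Dmax)⁻¹ ≤ (A + D j)⁻¹ := by
        apply inv_anti₀ (hd j)
        have := (hD j).2; linarith
      rw [hcdef]; linarith
    have h3 := hEdiag.conjTranspose_mul_mul_same X
    rwa [Matrix.conjTranspose_eq_transpose_of_trivial] at h3
  have hcXX : (c • (Xᵀ * X)).PosDef := aux_smul_posdef _ hXXpd hc
  have hdetlow : c ^ p * (Xᵀ * X).det ≤ (Xᵀ * (Vmat D A)⁻¹ * X).det := by
    have h5 := aux_det_le_det_add hcXX hEps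
    rw [← hdecomp] at h5
    have h6 : (c • (Xᵀ * X)).det = c ^ p * (Xᵀ * X).det := by
      rw [Matrix.det_smul, Fintype.card_fin]
    rw [h6] at h5
    exact h5
  -- Part 2 : lower bound on det V
  have hdetV : (Vmat D A).det = ∏ j, (A + D j) := by rw [Vmat, Matrix.det_diagonal]
  have hdetVlow : (A + Dmin) ^ m ≤ (Vmat D A).det := by
    rw [hdetV]
    have h7 := Finset.prod_le_prod (s := Finset.univ) (f := fun _ : Fin m => A + Dmin)
      (g := fun j => A + D j) (fun j _ => hs0.le) (fun j _ => by linarith [(hD j).1])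
    simpa [Finset.prod_const, Finset.card_univ] using h7
  have hdetVpos : 0 < (Vmat D A).det := lt_of_lt_of_le (pow_pos hs0 m) hdetVlow
  -- Part 3 : the quadratic form is nonnegative
  have hqnn : 0 ≤ y ⬝ᵥ (Pmat X D A).mulVec y := by
    have h8 : Pmat X D A
        = S * S - S * S * X * (Xᵀ * (S * S) * X)⁻¹ * Xᵀ * (S * S) := by
      rw [Pmat, ← hSS]
    rw [h8]
    apply aux_quad_nonneg S X hSsymm (Xᵀ * (S * S) * X) _ _ y
    · rw [hSS]; exact hGform
    · rw [hSS]; exact hGu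
  -- Part 4 : put everything together
  have hexp : Real.exp (-(1/2) * (y ⬝ᵥ (Pmat X D A).mulVec y)) ≤ 1 := by
    rw [Real.exp_le_one_iff]
    nlinarith
  have hexp0 : 0 < Real.exp (-(1/2) * (y ⬝ᵥ (Pmat X D A).mulVec y)) := Real.exp_pos _
  set dG := (Xᵀ * (Vmat D A)⁻¹ * X).det with hdG
  set dV := (Vmat D A).det with hdV
  set dM := (Xᵀ * X).det with hdM
  have hdGpos : 0 < dG := hGpd.det_pos
  have hdMpos : 0 < dM := hXXpd.det_pos
  have hlowpos : 0 < c ^ p * dM := mul_pos (pow_pos hc p) hdMpos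
  -- bound for the dG factor
  have h1 : dG ^ (-(1:ℝ)/2) ≤ (A + Dmax) ^ ((p:ℝ)/2) * dM ^ (-(1:ℝ)/2) := by
    have step := Real.rpow_le_rpow_of_nonpos hlowpos hdetlow (by norm_num : -(1:ℝ)/2 ≤ 0)
    have heq : (c ^ p * dM) ^ (-(1:ℝ)/2)
        = (A + Dmax) ^ ((p:ℝ)/2) * dM ^ (-(1:ℝ)/2) := by
      rw [Real.mul_rpow (pow_pos hc p).le hdMpos.le]
      congr 1
      have h9 : (c ^ p : ℝ) = (A + Dmax) ^ (-(p:ℝ)) := by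
        rw [Real.rpow_neg ht.le, Real.rpow_natCast, hcdef, inv_pow]
      rw [h9, ← Real.rpow_mul ht.le]
      congr 1
      ring
    rw [heq] at step
    exact step
  -- bound for the dV factor
  have h2 : dV ^ (-(1:ℝ)/2) ≤ (A + Dmin) ^ (-(m:ℝ)/2) := by
    have step := Real.rpow_le_rpow_of_nonpos (pow_pos hs0 m) hdetVlow
      (by norm_num : -(1:ℝ)/2 ≤ 0)
    have heq : ((A + Dmin) ^ m : ℝ) ^ (-(1:ℝ)/2) = (A + Dmin) ^ (-(m:ℝ)/2) := by
      rw [← Real.rpow_natCast (A + Dmin) m, ← Real.rpow_mul hs0.le]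
      congr 1
      ring
    rw [heq] at step
    exact step
  have hdGr : 0 < dG ^ (-(1:ℝ)/2) := Real.rpow_pos_of_pos hdGpos _
  have hdVr : 0 < dV ^ (-(1:ℝ)/2) := Real.rpow_pos_of_pos hdetVpos _
  have hb1 : 0 ≤ (A + Dmax) ^ ((p:ℝ)/2) * dM ^ (-(1:ℝ)/2) := by positivity
  calc LRE X D y A
      = dG ^ (-(1:ℝ)/2) * dV ^ (-(1:ℝ)/2)
        * Real.exp (-(1/2) * (y ⬝ᵥ (Pmat X D A).mulVec y)) := rfl
    _ ≤ dG ^ (-(1:ℝ)/2) * dV ^ (-(1:ℝ)/2) * 1 := by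
        exact mul_le_mul_of_nonneg_left hexp (by positivity)
    _ = dG ^ (-(1:ℝ)/2) * dV ^ (-(1:ℝ)/2) := mul_one _
    _ ≤ ((A + Dmax) ^ ((p:ℝ)/2) * dM ^ (-(1:ℝ)/2)) * ((A + Dmin) ^ (-(m:ℝ)/2)) := by
        exact mul_le_mul h1 h2 hdVr.le hb1
    _ = dM ^ (-(1:ℝ)/2) * (A + Dmax) ^ ((p:ℝ)/2) * (A + Dmin) ^ (-(m:ℝ)/2) := by ring
end

section
/- Suppose 0 < D_min ≤ D_j ≤ D_max for all j, m > p + 2, and h₊ : [0,∞) → ℝ satisfies 0 ≤ h₊(A) ≤ C for all A ≥ 0 and some constant C > 0. Then for each fixed i and fixed y ∈ ℝ^m, the adjusted likelihood A ↦ h₊(A)·(A + D_i)·L_RE(A) tends to 0 as A → ∞. -/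
open Matrix

open Filter
set_option maxHeartbeats 1600000

/-- A full-column-rank matrix has injective `mulVec`. -/
lemma aux_mulVec_inj {m p : ℕ} (X : Matrix (Fin m) (Fin p) ℝ) (hX : X.rank = p)
    {v : Fin p → ℝ} (hv : X *ᵥ v = 0) : v = 0 := by
  have h := X.mulVecLin.finrank_range_add_finrank_ker
  rw [Matrix.rank] at hX
  rw [hX, Module.finrank_pi, Fintype.card_fin] at h
  have hker : LinearMap.ker X.mulVecLin = ⊥ := Submodule.finrank_eq_zero.mp (by omega)
  have : v ∈ LinearMap.ker X.mulVecLin := by simpa [Matrix.mulVecLin_apply] using hv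
  simpa [hker] using this

/-- `Xᵀ W X` is positive definite for a positive diagonal `W` and full-column-rank `X`. -/
lemma aux_posdef_XtWX {m p : ℕ} (X : Matrix (Fin m) (Fin p) ℝ) (hX : X.rank = p)
    (w : Fin m → ℝ) (hw : ∀ j, 0 < w j) :
    (Xᵀ * Matrix.diagonal w * X).PosDef := by
  rw [Matrix.posDef_iff_dotProduct_mulVec]
  constructor
  · rw [Matrix.IsHermitian, Matrix.conjTranspose_eq_transpose_of_trivial]
    rw [Matrix.transpose_mul, Matrix.transpose_mul, Matrix.diagonal_transpose,
      Matrix.transpose_transpose, Matrix.mul_assoc]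
  · intro x hx
    have hu : X *ᵥ x ≠ 0 := fun h => hx (aux_mulVec_inj X hX h)
    have key : star x ⬝ᵥ (Xᵀ * Matrix.diagonal w * X) *ᵥ x
        = ∑ j, w j * (X *ᵥ x) j ^ 2 := by
      rw [← Matrix.mulVec_mulVec, ← Matrix.mulVec_mulVec, Matrix.dotProduct_mulVec,
        star_trivial, Matrix.vecMul_transpose]
      simp only [dotProduct, Matrix.mulVec_diagonal]
      exact Finset.sum_congr rfl fun k _ => by ring
    rw [key]
    obtain ⟨j, hj⟩ := Function.ne_iff.1 hu
    apply Finset.sum_pos' (fun k _ => mul_nonneg (hw k).le (sq_nonneg _))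
    have hj2 : (X *ᵥ x) j ≠ 0 := by simpa using hj
    exact ⟨j, Finset.mem_univ j, mul_pos (hw j) (by positivity)⟩

/-- The key algebraic identity: `P = Nᵀ W N` with `N = 1 - X (Xᵀ W X)⁻¹ Xᵀ W`. -/
lemma aux_P_eq {m p : ℕ} (X : Matrix (Fin m) (Fin p) ℝ) (W : Matrix (Fin m) (Fin m) ℝ)
    (hWs : Wᵀ = W) (hM : IsUnit (Xᵀ * W * X).det) :
    W - W * X * (Xᵀ * W * X)⁻¹ * Xᵀ * W
      = (1 - X * (Xᵀ * W * X)⁻¹ * Xᵀ * W)ᵀ * W * (1 - X * (Xᵀ * W * X)⁻¹ * Xᵀ * W) := by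
  have h1 : (Xᵀ * (W * X))⁻¹ * (Xᵀ * (W * X)) = 1 := by
    have := Matrix.nonsing_inv_mul _ hM
    rwa [Matrix.mul_assoc Xᵀ W X] at this
  have hMinvT : (Xᵀ * (W * X))⁻¹ᵀ = (Xᵀ * (W * X))⁻¹ := by
    rw [Matrix.transpose_nonsing_inv]
    congr 1
    rw [Matrix.transpose_mul, Matrix.transpose_mul, hWs, Matrix.transpose_transpose,
      Matrix.mul_assoc]
  have key : ∀ T : Matrix (Fin p) (Fin m) ℝ,
      (Xᵀ * (W * X))⁻¹ * (Xᵀ * (W * (X * T))) = T := by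
    intro T
    calc (Xᵀ * (W * X))⁻¹ * (Xᵀ * (W * (X * T)))
        = ((Xᵀ * (W * X))⁻¹ * (Xᵀ * (W * X))) * T := by
          simp only [Matrix.mul_assoc]
      _ = T := by rw [h1, Matrix.one_mul]
  simp only [Matrix.transpose_sub, Matrix.transpose_mul, Matrix.transpose_one,
    Matrix.transpose_transpose, Matrix.sub_mul, Matrix.mul_sub,
    Matrix.one_mul, Matrix.mul_one, Matrix.mul_assoc, hMinvT, hWs, key]
  abel

/-- If `0 < Dmin ≤ Dⱼ ≤ Dmax`, `m > p + 2`, and `h₊` is bounded with `0 ≤ h₊ ≤ C` on `[0,∞)`,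
then for each fixed `i` and fixed `y`, the adjusted likelihood
`A ↦ h₊(A) · (A + Dᵢ) · L_RE(A)` tends to `0` as `A → ∞`. -/
theorem stmt3 {m p : ℕ} (hp : 0 < p) (hm : m > p + 2)
    (X : Matrix (Fin m) (Fin p) ℝ) (hX : X.rank = p)
    (D : Fin m → ℝ) (Dmin Dmax : ℝ) (hDmin : 0 < Dmin)
    (hD : ∀ j, Dmin ≤ D j ∧ D j ≤ Dmax)
    (hplus : ℝ → ℝ) (C : ℝ) (hC : 0 < C)
    (hbound : ∀ A : ℝ, 0 ≤ A → 0 ≤ hplus A ∧ hplus A ≤ C)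
    (i : Fin m) (y : Fin m → ℝ) :
    Filter.Tendsto (fun A : ℝ => hplus A * (A + D i) * LRE X D y A)
      Filter.atTop (nhds 0) := by
  have hDpos : ∀ j, 0 < D j := fun j => lt_of_lt_of_le hDmin (hD j).1
  have hDmaxpos : 0 < Dmax := lt_of_lt_of_le (hDpos i) (hD i).2
  -- inverse of V
  have hVinv : ∀ A : ℝ, 0 ≤ A → (Vmat D A)⁻¹ = Matrix.diagonal (fun j => (A + D j)⁻¹) := by
    intro A hA
    apply Matrix.inv_eq_right_inv
    rw [Vmat, Matrix.diagonal_mul_diagonal]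
    have hne : ∀ j, A + D j ≠ 0 := fun j => by have := hDpos j; positivity
    simp only [mul_inv_cancel₀ (hne _)]
    exact Matrix.diagonal_one
  -- positive definiteness of M(A) = Xᵀ V⁻¹ X
  have hMpd : ∀ A : ℝ, 0 ≤ A → (Xᵀ * (Vmat D A)⁻¹ * X).PosDef := by
    intro A hA
    rw [hVinv A hA]
    exact aux_posdef_XtWX X hX _ (fun j => by have := hDpos j; positivity)
  -- positive semidefiniteness of P(A)
  have hPpsd : ∀ A : ℝ, 0 ≤ A → (Pmat X D A).PosSemidef := by
    intro A hA
    have hWs : ((Vmat D A)⁻¹)ᵀ = (Vmat D A)⁻¹ := by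
      rw [hVinv A hA]; exact Matrix.diagonal_transpose _
    have hMd : IsUnit (Xᵀ * (Vmat D A)⁻¹ * X).det := (hMpd A hA).det_pos.ne'.isUnit
    have hW : ((Vmat D A)⁻¹).PosSemidef := by
      rw [hVinv A hA]
      exact Matrix.PosSemidef.diagonal (fun j => by have := hDpos j; positivity)
    have hid := aux_P_eq X ((Vmat D A)⁻¹) hWs hMd
    rw [Pmat, hid]
    have := hW.conjTranspose_mul_mul_same
      (1 - X * (Xᵀ * (Vmat D A)⁻¹ * X)⁻¹ * Xᵀ * (Vmat D A)⁻¹)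
    rwa [Matrix.conjTranspose_eq_transpose_of_trivial] at this
  -- determinant of Xᵀ X
  set c : ℝ := (Xᵀ * X).det with hc_def
  have hcpos : 0 < c := by
    have := (aux_posdef_XtWX X hX (fun _ => (1 : ℝ)) (fun _ => one_pos)).det_pos
    rwa [Matrix.diagonal_one, Matrix.mul_one] at this
  -- tendsto of the rescaled determinant
  have hdet : Tendsto (fun A : ℝ => (A + Dmax) ^ p * (Xᵀ * (Vmat D A)⁻¹ * X).det)
      atTop (nhds c) := by
    have hscal : ∀ j : Fin m, Tendsto (fun A : ℝ => (A + Dmax) * (A + D j)⁻¹)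
        atTop (nhds 1) := by
      intro j
      have h0 : Tendsto (fun A : ℝ => (A + D j)⁻¹) atTop (nhds 0) :=
        (tendsto_atTop_add_const_right _ (D j) tendsto_id).inv_tendsto_atTop
      have h1 : Tendsto (fun A : ℝ => 1 + (Dmax - D j) * (A + D j)⁻¹) atTop
          (nhds (1 + (Dmax - D j) * 0)) := tendsto_const_nhds.add (tendsto_const_nhds.mul h0)
      rw [mul_zero, add_zero] at h1
      apply h1.congr'
      filter_upwards [eventually_ge_atTop (0:ℝ)] with A hA
      have hj : A + D j ≠ 0 := by have := hDpos j; positivity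
      field_simp
      ring
    have hmat : Tendsto (fun A : ℝ => Matrix.diagonal (fun j => (A + Dmax) * (A + D j)⁻¹))
        atTop (nhds (1 : Matrix (Fin m) (Fin m) ℝ)) := by
      rw [show (1 : Matrix (Fin m) (Fin m) ℝ) = Matrix.diagonal (fun _ => (1:ℝ)) from
        Matrix.diagonal_one.symm]
      have hcont : Continuous fun d : Fin m → ℝ => Matrix.diagonal d :=
        Continuous.matrix_diagonal continuous_id
      refine (hcont.tendsto _).comp ?_
      rw [tendsto_pi_nhds]
      exact hscal
    have hcont2 : Continuous fun Wm : Matrix (Fin m) (Fin m) ℝ => (Xᵀ * Wm * X).det :=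
      ((continuous_const.matrix_mul continuous_id).matrix_mul continuous_const).matrix_det
    have hcomp := (hcont2.tendsto 1).comp hmat
    simp only [Function.comp_def, Matrix.mul_one] at hcomp
    apply hcomp.congr'
    filter_upwards [eventually_ge_atTop (0:ℝ)] with A hA
    rw [hVinv A hA]
    rw [show Matrix.diagonal (fun j => (A + Dmax) * (A + D j)⁻¹)
        = (A + Dmax) • Matrix.diagonal (fun j => (A + D j)⁻¹) from by
      ext a b
      by_cases h : a = b <;> simp [Matrix.diagonal, h]]
    rw [Matrix.mul_smul, Matrix.smul_mul, Matrix.det_smul, Fintype.card_fin]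
  have hev : ∀ᶠ A : ℝ in atTop, c / 2 < (A + Dmax) ^ p * (Xᵀ * (Vmat D A)⁻¹ * X).det :=
    hdet.eventually (eventually_gt_nhds (by linarith))
  -- the exponent
  set e : ℝ := ((m : ℝ) - p - 2) / 2 with he_def
  have hmp : (p : ℝ) + 3 ≤ (m : ℝ) := by exact_mod_cast hm
  have he : 0 < e := by rw [he_def]; linarith
  set K : ℝ := 2 * C * (c / 2) ^ (-(1:ℝ)/2) * (2:ℝ) ^ ((p:ℝ)/2) with hK_def
  have hKpos : 0 < K := by
    have h1 : (0:ℝ) < (c / 2) ^ (-(1:ℝ)/2) := Real.rpow_pos_of_pos (by linarith) _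
    have h2 : (0:ℝ) < (2:ℝ) ^ ((p:ℝ)/2) := Real.rpow_pos_of_pos two_pos _
    positivity
  -- squeeze
  apply squeeze_zero' (g := fun A : ℝ => K * A ^ (-e))
  · -- nonnegativity of f
    filter_upwards [eventually_ge_atTop (0:ℝ)] with A hA
    have h1 : 0 < (Xᵀ * (Vmat D A)⁻¹ * X).det := (hMpd A hA).det_pos
    have h2 : 0 < (Vmat D A).det := by
      rw [Vmat, Matrix.det_diagonal]
      exact Finset.prod_pos (fun j _ => by have := hDpos j; positivity)
    have h3 : 0 ≤ hplus A := (hbound A hA).1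
    have h4 : 0 ≤ A + D i := by have := hDpos i; positivity
    have h5 : 0 ≤ LRE X D y A := by rw [LRE]; positivity
    positivity
  · -- upper bound
    filter_upwards [eventually_ge_atTop (1:ℝ), eventually_ge_atTop Dmax,
      eventually_ge_atTop (D i), hev] with A h1 h2 h3 h4
    have hApos : (0:ℝ) < A := lt_of_lt_of_le one_pos h1
    have hA0 : (0:ℝ) ≤ A := hApos.le
    have hADm : (0:ℝ) < A + Dmax := by positivity
    have hpowpos : (0:ℝ) < (A + Dmax) ^ p := by positivity
    set dM : ℝ := (Xᵀ * (Vmat D A)⁻¹ * X).det with hdM_def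
    set dV : ℝ := (Vmat D A).det with hdV_def
    have hdM : 0 < dM := (hMpd A hA0).det_pos
    have hdV : 0 < dV := by
      rw [hdV_def, Vmat, Matrix.det_diagonal]
      exact Finset.prod_pos (fun j _ => by have := hDpos j; positivity)
    have hdMlb : c / 2 * ((A + Dmax) ^ p)⁻¹ ≤ dM := by
      rw [mul_inv_le_iff₀ hpowpos, mul_comm]
      exact h4.le
    have hdVlb : A ^ m ≤ dV := by
      rw [hdV_def, Vmat, Matrix.det_diagonal]
      calc A ^ m = ∏ _j : Fin m, A := by
            rw [Finset.prod_const, Finset.card_univ, Fintype.card_fin]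
        _ ≤ ∏ j, (A + D j) :=
            Finset.prod_le_prod (fun j _ => hA0) (fun j _ => by have := hDpos j; linarith)
    -- quadratic form nonneg
    have hquad : 0 ≤ y ⬝ᵥ (Pmat X D A) *ᵥ y := by
      have := (hPpsd A hA0).dotProduct_mulVec_nonneg y
      simpa using this
    -- step bounds
    have hexp : Real.exp (-(1/2) * (y ⬝ᵥ (Pmat X D A) *ᵥ y)) ≤ 1 := by
      rw [Real.exp_le_one_iff]
      nlinarith
    have hLRE : LRE X D y A ≤ dM ^ (-(1:ℝ)/2) * dV ^ (-(1:ℝ)/2) := by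
      rw [LRE, ← hdM_def, ← hdV_def]
      exact mul_le_of_le_one_right
        (mul_nonneg (Real.rpow_nonneg hdM.le _) (Real.rpow_nonneg hdV.le _)) hexp
    have hdMb : dM ^ (-(1:ℝ)/2) ≤ (c/2) ^ (-(1:ℝ)/2) * (A + Dmax) ^ ((p:ℝ)/2) := by
      have hlbpos : (0:ℝ) < c / 2 * ((A + Dmax) ^ p)⁻¹ := by positivity
      calc dM ^ (-(1:ℝ)/2) ≤ (c / 2 * ((A + Dmax) ^ p)⁻¹) ^ (-(1:ℝ)/2) :=
            Real.rpow_le_rpow_of_nonpos hlbpos hdMlb (by norm_num)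
        _ = (c/2) ^ (-(1:ℝ)/2) * (((A + Dmax) ^ p)⁻¹) ^ (-(1:ℝ)/2) :=
            Real.mul_rpow (by linarith) (by positivity)
        _ = (c/2) ^ (-(1:ℝ)/2) * (A + Dmax) ^ ((p:ℝ)/2) := by
            congr 1
            rw [← Real.rpow_natCast (A + Dmax) p, ← Real.rpow_neg hADm.le,
              ← Real.rpow_mul hADm.le]
            congr 1
            ring
    have hdVb : dV ^ (-(1:ℝ)/2) ≤ A ^ (-((m:ℝ)/2)) := by
      have hApow : (0:ℝ) < A ^ m := by positivity
      calc dV ^ (-(1:ℝ)/2) ≤ (A ^ m) ^ (-(1:ℝ)/2) :=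
            Real.rpow_le_rpow_of_nonpos hApow hdVlb (by norm_num)
        _ = A ^ (-((m:ℝ)/2)) := by
            rw [← Real.rpow_natCast A m, ← Real.rpow_mul hA0]
            congr 1
            ring
    have hADmax2 : (A + Dmax) ^ ((p:ℝ)/2) ≤ (2:ℝ) ^ ((p:ℝ)/2) * A ^ ((p:ℝ)/2) := by
      rw [← Real.mul_rpow (by norm_num) hA0]
      exact Real.rpow_le_rpow hADm.le (by linarith) (by positivity)
    -- assemble
    have h6 : 0 ≤ A + D i := by have := hDpos i; positivity
    have h7 : A + D i ≤ 2 * A := by linarith [(hD i).2]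
    have h8 : 0 ≤ LRE X D y A := by
      rw [LRE, ← hdM_def, ← hdV_def]
      exact mul_nonneg (mul_nonneg (Real.rpow_nonneg hdM.le _) (Real.rpow_nonneg hdV.le _))
        (Real.exp_pos _).le
    calc hplus A * (A + D i) * LRE X D y A
        ≤ C * (A + D i) * LRE X D y A :=
          mul_le_mul_of_nonneg_right
            (mul_le_mul_of_nonneg_right (hbound A hA0).2 h6) h8
      _ ≤ C * (2 * A) * (((c/2) ^ (-(1:ℝ)/2) * ((2:ℝ) ^ ((p:ℝ)/2) * A ^ ((p:ℝ)/2)))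
            * A ^ (-((m:ℝ)/2))) := by
          have hb1 : LRE X D y A ≤ ((c/2) ^ (-(1:ℝ)/2) * ((2:ℝ) ^ ((p:ℝ)/2) * A ^ ((p:ℝ)/2)))
              * A ^ (-((m:ℝ)/2)) := by
            refine hLRE.trans ?_
            have := mul_le_mul (hdMb.trans (by
                have h0 : (0:ℝ) ≤ (c/2) ^ (-(1:ℝ)/2) := Real.rpow_nonneg (by linarith) _
                exact mul_le_mul_of_nonneg_left hADmax2 h0))
              hdVb (Real.rpow_nonneg hdV.le _)
              (by positivity)
            exact this
          exact mul_le_mul (mul_le_mul_of_nonneg_left h7 hC.le) hb1 h8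
            (by positivity)
      _ = K * A ^ (-e) := by
          rw [show -e = 1 + ((p:ℝ)/2 + -((m:ℝ)/2)) from by rw [he_def]; ring,
            Real.rpow_add hApos, Real.rpow_add hApos, Real.rpow_one, hK_def]
          ring
  · -- the dominating function tends to zero
    have := (tendsto_rpow_neg_atTop he).const_mul K
    simpa using this
end

section
/- (Exact MSE of the BLUP.) In the Fay–Herriot model, for known A > 0 the best linear unbiased predictor θ̂_i^{BLUP}(A) = (1 − B_i)·y_i + B_i·x_iᵀβ̂(A), where B_i = D_i/(A+D_i) and β̂(A) = (XᵀV(A)⁻¹X)⁻¹XᵀV(A)⁻¹y, satisfies E[(θ̂_i^{BLUP}(A) − θ_i)²] = g_{1i}(A) + g_{2i}(A), where g_{1i}(A) = A·D_i/(A+D_i) and g_{2i}(A) = (D_i/(A+D_i))² · x_iᵀ(XᵀV(A)⁻¹X)⁻¹x_i. -/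
open Matrix MeasureTheory ProbabilityTheory

open Real
open scoped NNReal ENNReal

namespace FHaux


lemma pdf_eq (v : ℝ≥0) :
    gaussianPDFReal 0 v = fun x => (Real.sqrt (2*π*v))⁻¹ * Real.exp (-(2*(v:ℝ))⁻¹ * x^2) := by
  funext x
  rw [gaussianPDFReal]
  congr 1
  congr 1
  rw [sub_zero]
  ring

lemma gauss_integral_fun {v : ℝ≥0} (hv : v ≠ 0) (g : ℝ → ℝ) :
    ∫ x, g x ∂(gaussianReal 0 v) = ∫ x, gaussianPDFReal 0 v x * g x := by
  rw [gaussianReal_of_var_ne_zero _ hv]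
  have h1 : (gaussianPDF 0 v) = fun x => ((Real.toNNReal (gaussianPDFReal 0 v x) : ℝ≥0) : ℝ≥0∞) := by
    funext x; rfl
  rw [h1, integral_withDensity_eq_integral_smul₀
    ((measurable_gaussianPDFReal 0 v).real_toNNReal.aemeasurable) g]
  congr 1
  funext x
  rw [NNReal.smul_def, smul_eq_mul, Real.coe_toNNReal _ (gaussianPDFReal_nonneg 0 v x)]

lemma gauss_integrable_iff {v : ℝ≥0} (hv : v ≠ 0) (g : ℝ → ℝ) :
    Integrable g (gaussianReal 0 v) ↔
      Integrable (fun x => gaussianPDFReal 0 v x * g x) volume := by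
  rw [gaussianReal_of_var_ne_zero _ hv]
  have h1 : (gaussianPDF 0 v) = fun x => ((Real.toNNReal (gaussianPDFReal 0 v x) : ℝ≥0) : ℝ≥0∞) := by
    funext x; rfl
  rw [h1, integrable_withDensity_iff_integrable_smul₀
    ((measurable_gaussianPDFReal 0 v).real_toNNReal.aemeasurable)]
  constructor <;> intro h <;> refine h.congr (ae_of_all _ fun x => ?_) <;>
    simp [NNReal.smul_def, Real.coe_toNNReal _ (gaussianPDFReal_nonneg 0 v x)]

lemma coe_pos {v : ℝ≥0} (hv : v ≠ 0) : 0 < (v:ℝ) := NNReal.coe_pos.2 hv.bot_lt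

lemma hb_pos {v : ℝ≥0} (hv : v ≠ 0) : 0 < (2*(v:ℝ))⁻¹ := by
  have := coe_pos hv; positivity

lemma integrable_pdf_mul_id {v : ℝ≥0} (hv : v ≠ 0) :
    Integrable (fun x => gaussianPDFReal 0 v x * x) volume := by
  rw [pdf_eq]
  exact ((integrable_mul_exp_neg_mul_sq (hb_pos hv)).const_mul
    ((Real.sqrt (2*π*v))⁻¹)).congr (ae_of_all _ fun x => by ring)

lemma integrable_pdf_mul_sq {v : ℝ≥0} (hv : v ≠ 0) :
    Integrable (fun x => gaussianPDFReal 0 v x * x^2) volume := by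
  rw [pdf_eq]
  have h := (integrable_rpow_mul_exp_neg_mul_sq (hb_pos hv) (s := 2)
    (by norm_num)).const_mul ((Real.sqrt (2*π*v))⁻¹)
  refine h.congr (ae_of_all _ fun x => ?_)
  simp only [Real.rpow_two]
  ring

lemma gauss_integral_id {v : ℝ≥0} (hv : v ≠ 0) :
    ∫ x, x ∂(gaussianReal 0 v) = 0 := by
  rw [gauss_integral_fun hv]
  have hodd : ∀ x : ℝ, gaussianPDFReal 0 v (-x) * (-x) = -(gaussianPDFReal 0 v x * x) := by
    intro x
    rw [pdf_eq]
    simp only [neg_sq]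
    ring
  have h := MeasureTheory.integral_neg_eq_self (fun x => gaussianPDFReal 0 v x * x)
    (volume : Measure ℝ)
  simp only [hodd, integral_neg] at h
  linarith

lemma gauss_integral_sq {v : ℝ≥0} (hv : v ≠ 0) :
    ∫ x, x^2 ∂(gaussianReal 0 v) = v := by
  rw [gauss_integral_fun hv, pdf_eq]
  have hv' := coe_pos hv
  set t : ℝ := 2*(v:ℝ) with ht
  have htpos : 0 < t := by positivity
  have h1 : ∀ x : ℝ, (Real.sqrt (2*π*v))⁻¹ * Real.exp (-t⁻¹ * x^2) * x^2
      = (Real.sqrt (2*π*v))⁻¹ * ((fun y => y^2 * Real.exp (-t⁻¹ * y^2)) |x|) := by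
    intro x
    simp only [sq_abs]
    ring
  simp only [h1]
  rw [integral_const_mul, integral_comp_abs (f := fun y => y^2 * Real.exp (-t⁻¹ * y^2))]
  have h2 : ∫ x in Set.Ioi (0:ℝ), x^2 * Real.exp (-t⁻¹ * x^2)
      = (t⁻¹) ^ (-(3:ℝ)/2) * (1/2) * Real.Gamma (3/2) := by
    have h3 := integral_rpow_mul_exp_neg_mul_rpow (p := 2) (q := 2) (b := t⁻¹)
      (by norm_num) (by norm_num) (by positivity)
    simp only [Real.rpow_two] at h3
    rw [h3]
    norm_num
  rw [h2]
  have hGamma : Real.Gamma (3/2) = Real.sqrt π / 2 := by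
    have h32 : (3:ℝ)/2 = 1/2 + 1 := by norm_num
    rw [h32, Real.Gamma_add_one (by norm_num), Real.Gamma_one_half_eq]
    ring
  have hbrpow : (t⁻¹ : ℝ) ^ (-(3:ℝ)/2) = t * Real.sqrt t := by
    rw [Real.inv_rpow htpos.le, ← Real.rpow_neg htpos.le, neg_div, neg_neg,
      show (3:ℝ)/2 = 1 + 1/2 by norm_num, Real.rpow_add htpos, Real.rpow_one,
      ← Real.sqrt_eq_rpow]
  rw [hbrpow, hGamma]
  have hsqrt : Real.sqrt (2*π*(v:ℝ)) = Real.sqrt π * Real.sqrt t := by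
    rw [← Real.sqrt_mul Real.pi_pos.le t, show 2*π*(v:ℝ) = π * t by rw [ht]; ring]
  rw [hsqrt]
  have hsp : Real.sqrt π ≠ 0 := ne_of_gt (Real.sqrt_pos.2 Real.pi_pos)
  have hst : Real.sqrt t ≠ 0 := ne_of_gt (Real.sqrt_pos.2 htpos)
  have hv2 : (v:ℝ) = t/2 := by rw [ht]; ring
  rw [hv2]
  field_simp

lemma gauss_memL2 {v : ℝ≥0} (hv : v ≠ 0) :
    MemLp (fun x : ℝ => x) 2 (gaussianReal 0 v) := by
  rw [memLp_two_iff_integrable_sq (f := fun x : ℝ => x) measurable_id.aestronglyMeasurable]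
  rw [gauss_integrable_iff hv]
  exact integrable_pdf_mul_sq hv



lemma inv_diag {m : ℕ} (d : Fin m → ℝ) (hd : ∀ j, 0 < d j) :
    (Matrix.diagonal d)⁻¹ = Matrix.diagonal (fun j => (d j)⁻¹) := by
  apply Matrix.inv_eq_right_inv
  rw [Matrix.diagonal_mul_diagonal]
  have : (fun j => d j * (d j)⁻¹) = fun _ => (1:ℝ) := by
    funext j; exact mul_inv_cancel₀ (hd j).ne'
  rw [this, Matrix.diagonal_one]

lemma mulVec_inj {m p : ℕ} (X : Matrix (Fin m) (Fin p) ℝ) (hX : X.rank = p) :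
    Function.Injective X.mulVec := by
  have h1 : LinearMap.ker X.mulVecLin = ⊥ := by
    have h2 := X.mulVecLin.finrank_range_add_finrank_ker
    rw [show Module.finrank ℝ (Fin p → ℝ) = p by simp] at h2
    have h3 : Module.finrank ℝ (LinearMap.range X.mulVecLin) = p := hX
    have h4 : Module.finrank ℝ (LinearMap.ker X.mulVecLin) = 0 := by omega
    exact Submodule.finrank_eq_zero.mp h4
  have := LinearMap.ker_eq_bot.mp h1
  intro a b hab
  exact this hab

lemma G_isUnit {m p : ℕ} (X : Matrix (Fin m) (Fin p) ℝ) (hX : X.rank = p)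
    (d : Fin m → ℝ) (hd : ∀ j, 0 < d j) :
    IsUnit (Xᵀ * (Matrix.diagonal d)⁻¹ * X).det := by
  rw [isUnit_iff_ne_zero]
  intro hdet
  obtain ⟨z, hz, hGz⟩ := (Matrix.exists_mulVec_eq_zero_iff).mpr hdet
  have hu : X.mulVec z ≠ 0 := by
    intro h
    exact hz (mulVec_inj X hX (by rw [h, Matrix.mulVec_zero]))
  have hquad : z ⬝ᵥ (Xᵀ * (Matrix.diagonal d)⁻¹ * X).mulVec z
      = ∑ j, (d j)⁻¹ * (X.mulVec z j)^2 := by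
    rw [inv_diag d hd, ← Matrix.mulVec_mulVec, ← Matrix.mulVec_mulVec,
      Matrix.dotProduct_mulVec, Matrix.vecMul_transpose]
    simp [dotProduct, Matrix.mulVec_diagonal]
    congr 1
    funext j
    ring
  rw [hGz, dotProduct_zero] at hquad
  obtain ⟨j0, hj0⟩ := Function.ne_iff.mp hu
  have hj0' : X.mulVec z j0 ≠ 0 := by simpa using hj0
  have hpos : 0 < ∑ j, (d j)⁻¹ * (X.mulVec z j)^2 := by
    apply Finset.sum_pos' (fun j _ => mul_nonneg (inv_nonneg.2 (hd j).le) (sq_nonneg _))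
    refine ⟨j0, Finset.mem_univ _, ?_⟩
    have h5 : (0:ℝ) < (X.mulVec z j0) ^ 2 := by positivity
    exact mul_pos (inv_pos.2 (hd j0)) h5
  rw [← hquad] at hpos
  exact lt_irrefl _ hpos

end FHaux

/-- Exact MSE of the BLUP in the Fay–Herriot model: for known `A > 0`, with mutually
independent `v₁,…,vₘ, e₁,…,eₘ` where `vⱼ ~ N(0,A)`, `eⱼ ~ N(0,Dⱼ)`, `θⱼ = xⱼᵀβ + vⱼ`,
`yⱼ = θⱼ + eⱼ`, `V(A) = diag(A+D₁,…,A+Dₘ)`, `β̂(A) = (XᵀV⁻¹X)⁻¹XᵀV⁻¹y` and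
`Bᵢ = Dᵢ/(A+Dᵢ)`, the BLUP `θ̂ᵢ = (1 − Bᵢ)·yᵢ + Bᵢ·xᵢᵀβ̂(A)` satisfies
`E[(θ̂ᵢ − θᵢ)²] = g₁ᵢ(A) + g₂ᵢ(A)` with `g₁ᵢ(A) = A·Dᵢ/(A+Dᵢ)` and
`g₂ᵢ(A) = (Dᵢ/(A+Dᵢ))²·xᵢᵀ(XᵀV⁻¹X)⁻¹xᵢ`. -/
theorem stmt15 {Ω : Type*} [MeasureSpace Ω] [IsProbabilityMeasure (ℙ : Measure Ω)]
    {m p : ℕ} (hp : 0 < p) (hpm : p ≤ m)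
    (X : Matrix (Fin m) (Fin p) ℝ) (hX : X.rank = p)
    (β : Fin p → ℝ) (D : Fin m → ℝ) (hD : ∀ j, 0 < D j) (A : ℝ) (hA : 0 < A)
    (v e : Ω → Fin m → ℝ) (hv : Measurable v) (he : Measurable e)
    (hind : iIndepFun
      (Sum.elim (fun j ω => v ω j) (fun j ω => e ω j) : Fin m ⊕ Fin m → Ω → ℝ) ℙ)
    (hvg : ∀ j, Measure.map (fun ω => v ω j) ℙ = gaussianReal 0 (Real.toNNReal A))
    (heg : ∀ j, Measure.map (fun ω => e ω j) ℙ = gaussianReal 0 (Real.toNNReal (D j)))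
    (θ y : Ω → Fin m → ℝ)
    (hθ : ∀ ω j, θ ω j = (∑ k, X j k * β k) + v ω j)
    (hy : ∀ ω j, y ω j = θ ω j + e ω j)
    (V : Matrix (Fin m) (Fin m) ℝ) (hV : V = Matrix.diagonal (fun j => A + D j))
    (βhat : Ω → Fin p → ℝ)
    (hβ : ∀ ω, βhat ω = ((Xᵀ * V⁻¹ * X)⁻¹ * Xᵀ * V⁻¹).mulVec (y ω))
    (i : Fin m) :
    (∫ ω, ((1 - D i / (A + D i)) * y ω i +
        (D i / (A + D i)) * (∑ k, X i k * βhat ω k) - θ ω i) ^ 2) =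
      A * D i / (A + D i) +
        (D i / (A + D i)) ^ 2 *
          ((fun k => X i k) ⬝ᵥ ((Xᵀ * V⁻¹ * X)⁻¹).mulVec (fun k => X i k)) := by
  subst hV
  have hd : ∀ j, 0 < A + D j := fun j => by have := hD j; linarith
  set B : ℝ := D i / (A + D i) with hB
  set Vd : Matrix (Fin m) (Fin m) ℝ := Matrix.diagonal (fun j => A + D j) with hVd
  have hVdet : IsUnit Vd.det := by
    rw [hVd, Matrix.det_diagonal]
    exact isUnit_iff_ne_zero.mpr (Finset.prod_ne_zero_iff.mpr (fun j _ => (hd j).ne'))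
  set G : Matrix (Fin p) (Fin p) ℝ := Xᵀ * Vd⁻¹ * X with hG
  have hGdet : IsUnit G.det := by rw [hG, hVd]; exact FHaux.G_isUnit X hX _ hd
  set Q : Matrix (Fin p) (Fin p) ℝ := G⁻¹ with hQ
  have hQG : Q * G = 1 := Matrix.nonsing_inv_mul G hGdet
  have hVdsym : Vdᵀ = Vd := by rw [hVd, Matrix.diagonal_transpose]
  have hVinvsym : (Vd⁻¹)ᵀ = Vd⁻¹ := by rw [Matrix.transpose_nonsing_inv, hVdsym]
  have hGsym : Gᵀ = G := by
    rw [hG, Matrix.transpose_mul, Matrix.transpose_mul, Matrix.transpose_transpose,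
      hVinvsym, ← Matrix.mul_assoc]
  have hQsym : Qᵀ = Q := by rw [hQ, Matrix.transpose_nonsing_inv, hGsym]
  set M : Matrix (Fin p) (Fin m) ℝ := Q * Xᵀ * Vd⁻¹ with hM
  have hMX : M * X = 1 := by
    rw [hM, Matrix.mul_assoc (Q * Xᵀ) (Vd⁻¹) X, Matrix.mul_assoc Q (Xᵀ) (Vd⁻¹ * X),
      ← Matrix.mul_assoc (Xᵀ) (Vd⁻¹) X, ← hG]
    exact hQG
  set xi : Fin p → ℝ := fun k => X i k with hxi
  set c : Fin m → ℝ := Matrix.vecMul xi M with hc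
  have hcX : Matrix.vecMul c X = xi := by
    rw [hc, Matrix.vecMul_vecMul, hMX, Matrix.vecMul_one]
  have hMT : Mᵀ = Vd⁻¹ * (X * Q) := by
    rw [hM, Matrix.transpose_mul, Matrix.transpose_mul, Matrix.transpose_transpose,
      hVinvsym, hQsym]
  have hMVMT : M * (Vd * Mᵀ) = Q := by
    rw [hMT, Matrix.mul_nonsing_inv_cancel_left _ _ hVdet, ← Matrix.mul_assoc, hMX,
      Matrix.one_mul]
  have hsum_c : ∑ j, (A + D j) * (c j)^2 = xi ⬝ᵥ Q.mulVec xi := by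
    have h1 : ∑ j, (A + D j) * (c j)^2 = c ⬝ᵥ Vd.mulVec c := by
      rw [hVd]
      simp only [dotProduct, Matrix.mulVec_diagonal]
      exact Finset.sum_congr rfl fun j _ => by ring
    have hc2 : c = Mᵀ.mulVec xi := by rw [hc, Matrix.mulVec_transpose]
    rw [h1]
    nth_rewrite 2 [hc2]
    rw [Matrix.mulVec_mulVec, hc, ← Matrix.dotProduct_mulVec, Matrix.mulVec_mulVec, hMVMT]
  -- probability setup
  set Z := (Sum.elim (fun j ω => v ω j) (fun j ω => e ω j) : Fin m ⊕ Fin m → Ω → ℝ) with hZ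
  set σ2 : Fin m ⊕ Fin m → ℝ := Sum.elim (fun _ => A) (fun j => D j) with hσ2
  set w : Fin m ⊕ Fin m → ℝ := Sum.elim (fun j => B * c j - (if j = i then B else 0))
    (fun j => B * c j + (if j = i then 1 - B else 0)) with hw
  have hσpos : ∀ s, 0 < σ2 s := by
    intro s
    cases s with
    | inl j => simpa [hσ2] using hA
    | inr j => simpa [hσ2] using hD j
  have hσne : ∀ s, Real.toNNReal (σ2 s) ≠ 0 := fun s => (Real.toNNReal_pos.mpr (hσpos s)).ne'
  have hmapZ : ∀ s, Measure.map (Z s) ℙ = gaussianReal 0 (Real.toNNReal (σ2 s)) := by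
    intro s
    cases s with
    | inl j => simpa [hZ, hσ2] using hvg j
    | inr j => simpa [hZ, hσ2] using heg j
  have hZmeas : ∀ s, Measurable (Z s) := by
    intro s
    cases s with
    | inl j => exact (measurable_pi_apply j).comp hv
    | inr j => exact (measurable_pi_apply j).comp he
  have hZL2 : ∀ s, MemLp (Z s) 2 ℙ := by
    intro s
    have h := FHaux.gauss_memL2 (hσne s)
    rw [← hmapZ s] at h
    exact (memLp_map_measure_iff measurable_id.aestronglyMeasurable
      (hZmeas s).aemeasurable).mp h
  have hZint : ∀ s, ∫ ω, Z s ω = 0 := by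
    intro s
    have h := MeasureTheory.integral_map (μ := ℙ) (hZmeas s).aemeasurable
      (f := fun x : ℝ => x) measurable_id.aestronglyMeasurable
    rw [hmapZ s] at h
    rw [← h]
    exact FHaux.gauss_integral_id (hσne s)
  have hZsq : ∀ s, ∫ ω, (Z s ω)^2 = σ2 s := by
    intro s
    have h := MeasureTheory.integral_map (μ := ℙ) (hZmeas s).aemeasurable
      (f := fun x : ℝ => x^2) (measurable_id.pow_const 2).aestronglyMeasurable
    rw [hmapZ s] at h
    rw [← h, FHaux.gauss_integral_sq (hσne s), Real.coe_toNNReal _ (hσpos s).le]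
  have hVarZ : ∀ s, variance (Z s) ℙ = σ2 s := by
    intro s
    rw [variance_of_integral_eq_zero (hZL2 s).aemeasurable (hZint s)]
    exact hZsq s
  -- key pointwise identity
  have hkey : ∀ ω, (1 - B) * y ω i + B * (∑ k, X i k * βhat ω k) - θ ω i
      = ∑ s, w s * Z s ω := by
    intro ω
    have h1 : ∑ k, X i k * βhat ω k = (∑ k, X i k * β k) + ∑ j, c j * (v ω j + e ω j) := by
      rw [hβ ω]
      have e1 : ∑ k, X i k * (M.mulVec (y ω)) k = xi ⬝ᵥ (M.mulVec (y ω)) := rfl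
      rw [e1, Matrix.dotProduct_mulVec, ← hc]
      have e2 : c ⬝ᵥ y ω = ∑ j, c j * y ω j := rfl
      rw [e2]
      have e3 : ∀ j, c j * y ω j = c j * (X.mulVec β) j + c j * (v ω j + e ω j) := by
        intro j
        rw [hy ω j, hθ ω j]
        have e4 : (X.mulVec β) j = ∑ k, X j k * β k := rfl
        rw [e4]
        ring
      rw [Finset.sum_congr rfl (fun j _ => e3 j), Finset.sum_add_distrib]
      congr 1
      have e5 : ∑ j, c j * (X.mulVec β) j = c ⬝ᵥ (X.mulVec β) := rfl
      rw [e5, Matrix.dotProduct_mulVec, hcX]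
      rfl
    rw [h1, hy ω i, hθ ω i, Fintype.sum_sum_type]
    simp only [hw, hZ, Sum.elim_inl, Sum.elim_inr, sub_mul, add_mul, ite_mul, zero_mul,
      Finset.sum_sub_distrib, Finset.sum_add_distrib, Finset.sum_ite_eq', Finset.mem_univ,
      if_true, mul_add, mul_assoc, ← Finset.mul_sum]
    ring
  -- rewrite the integrand
  have hrw : (∫ ω, ((1 - B) * y ω i + B * (∑ k, X i k * βhat ω k) - θ ω i) ^ 2)
      = ∫ ω, (∑ s, w s * Z s ω) ^ 2 := by
    congr 1
    funext ω
    rw [hkey ω]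
  rw [hrw]
  -- the integral equals the variance
  have hfun : (fun ω => ∑ s, w s * Z s ω)
      = ∑ s : Fin m ⊕ Fin m, (fun ω => w s * Z s ω) := by
    funext ω
    simp [Finset.sum_apply]
  have hEL2 : MemLp (fun ω => ∑ s, w s * Z s ω) 2 ℙ := by
    rw [hfun]
    exact memLp_finset_sum' _ (fun s _ => (hZL2 s).const_mul (w s))
  have hEint : ∫ ω, (∑ s, w s * Z s ω) = 0 := by
    rw [integral_finset_sum _ (fun s _ => ((hZL2 s).integrable one_le_two).const_mul (w s))]
    refine Finset.sum_eq_zero fun s _ => ?_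
    rw [integral_const_mul, hZint s, mul_zero]
  have hEq : ∫ ω, (∑ s, w s * Z s ω) ^ 2 = variance (fun ω => ∑ s, w s * Z s ω) ℙ := by
    rw [variance_of_integral_eq_zero hEL2.aemeasurable hEint]
  rw [hEq]
  have hvar : variance (fun ω => ∑ s, w s * Z s ω) ℙ = ∑ s, (w s)^2 * σ2 s := by
    rw [hfun, ProbabilityTheory.IndepFun.variance_sum
      (fun s _ => (hZL2 s).const_mul (w s))
      (fun s _ t _ hst => (hind.indepFun hst).comp
        (measurable_const_mul (w s)) (measurable_const_mul (w t)))]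
    exact Finset.sum_congr rfl fun s _ => by rw [variance_const_mul, hVarZ s]
  rw [hvar, Fintype.sum_sum_type]
  simp only [hw, hσ2, Sum.elim_inl, Sum.elim_inr]
  have hptw : ∀ j, (B * c j - if j = i then B else 0)^2 * A
        + (B * c j + if j = i then 1 - B else 0)^2 * D j
      = B^2 * ((A + D j) * (c j)^2) + (if j = i then A * D i / (A + D i) else 0) := by
    intro j
    by_cases hj : j = i
    · subst hj
      simp only [if_pos rfl, ↓reduceIte]
      rw [hB]
      have hne : A + D j ≠ 0 := (hd j).ne'
      field_simp
      ring
    · simp only [if_neg hj]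
      ring
  rw [← Finset.sum_add_distrib, Finset.sum_congr rfl (fun j _ => hptw j),
    Finset.sum_add_distrib, ← Finset.mul_sum, hsum_c,
    Finset.sum_ite_eq' Finset.univ i (fun _ => A * D i / (A + D i))]
  simp only [Finset.mem_univ, if_true]
  ring
end
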